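/- Consider noise-free Gaussian process regression (λ = 0) with symmetric covariance function Σ₀, mean function μ₀, distinct evaluated points x₁,…,xₙ with observed values yᵢ = f(xᵢ), such that Kₙ = Σ₀(x_{1:n},x_{1:n}) is invertible, and a candidate point x = x_{n+1} with posterior variance σₙ²(x) = Σ₀(x,x) − Σ₀(x,x_{1:n}) Kₙ⁻¹ Σ₀(x_{1:n},x) > 0 and with K_{n+1} = Σ₀(x_{1:n+1},x_{1:n+1}) invertible. Let the value y_{n+1} of the new observation be a random variable with the normal distribution of mean μₙ(x) = μ₀(x) + Σ₀(x,x_{1:n}) Kₙ⁻¹ (y_{1:n} − μ₀(x_{1:n})) and variance σₙ²(x), and define μ_{n+1}(·) to be the posterior mean computed from the n+1 data points (x_{1:n+1}, y_{1:n+1}). Then the knowledge-gradient factor with Aₙ = {x₁,…,xₙ} and A_{n+1} = {x₁,…,x_{n+1}}, namely KGₙ(x) = E[max_{i=1,…,n+1} μ_{n+1}(xᵢ)] − max_{i=1,…,n} μₙ(xᵢ), equals the expected improvement EI(x) = E[(y_{n+1} − f*ₙ)⁺], where f*ₙ = max_{i=1,…,n} yᵢ. -/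

import Mathlib

open Matrix ProbabilityTheory MeasureTheory Real

/-- The kernel matrix `Σ₀(x_{1:n}, x_{1:n}) + λ² Iₙ`. -/
noncomputable def kernelMat {X : Type*} (S₀ : X → X → ℝ) {n : ℕ} (x : Fin n → X) (lam2 : ℝ) :
    Matrix (Fin n) (Fin n) ℝ :=
  (Matrix.of fun i j => S₀ (x i) (x j)) + lam2 • 1

/-- The Gaussian process posterior mean
`μₙ(z) = μ₀(z) + Σ₀(z, x_{1:n}) (Σ₀(x_{1:n},x_{1:n}) + λ²Iₙ)⁻¹ (y_{1:n} - μ₀(x_{1:n}))`. -/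
noncomputable def postMean {X : Type*} {n : ℕ} (S₀ : X → X → ℝ) (μ₀ : X → ℝ)
    (x : Fin n → X) (y : Fin n → ℝ) (lam2 : ℝ) (z : X) : ℝ :=
  μ₀ z + (fun i => S₀ z (x i)) ⬝ᵥ ((kernelMat S₀ x lam2)⁻¹ *ᵥ (y - fun i => μ₀ (x i)))

/-- The Gaussian process posterior covariance
`Σₙ(z, z') = Σ₀(z,z') - Σ₀(z, x_{1:n}) (Σ₀(x_{1:n},x_{1:n}) + λ²Iₙ)⁻¹ Σ₀(x_{1:n}, z')`. -/
noncomputable def postCov {X : Type*} {n : ℕ} (S₀ : X → X → ℝ) (x : Fin n → X) (lam2 : ℝ)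
    (z z' : X) : ℝ :=
  S₀ z z' - (fun i => S₀ z (x i)) ⬝ᵥ ((kernelMat S₀ x lam2)⁻¹ *ᵥ fun i => S₀ (x i) z')

/-- Identity function is integrable w.r.t. the real Gaussian measure. -/
lemma integrable_id_gaussianReal' (μ : ℝ) (v : NNReal) :
    Integrable (fun x : ℝ => x) (gaussianReal μ v) := by
  by_cases hv : v = 0
  · rw [hv, gaussianReal_zero_var]
    refine ⟨measurable_id.aestronglyMeasurable, ?_⟩
    simp [MeasureTheory.HasFiniteIntegral, MeasureTheory.lintegral_dirac]
  · rw [gaussianReal_of_var_ne_zero _ hv]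
    rw [MeasureTheory.integrable_withDensity_iff (measurable_gaussianPDF μ v)
      (Filter.Eventually.of_forall fun x => ENNReal.ofReal_lt_top)]
    have htoReal : ∀ x, ((gaussianPDF μ v x).toReal) = gaussianPDFReal μ v x := fun x =>
      ENNReal.toReal_ofReal (gaussianPDFReal_nonneg μ v x)
    simp_rw [htoReal]
    have hv' : (0:ℝ) < (v:ℝ) := lt_of_le_of_ne v.coe_nonneg (by exact_mod_cast (Ne.symm hv))
    have hb : (0:ℝ) < (2 * (v:ℝ))⁻¹ := by positivity
    have key : ∀ x : ℝ, x * gaussianPDFReal μ v x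
        = (√(2 * π * v))⁻¹ * ((x - μ) * rexp (-(2 * (v:ℝ))⁻¹ * (x - μ)^2))
          + μ * gaussianPDFReal μ v x := by
      intro x
      rw [gaussianPDFReal]
      have harg : - (x - μ)^2 / (2 * (v:ℝ)) = -(2 * (v:ℝ))⁻¹ * (x - μ)^2 := by
        field_simp
      rw [harg]; ring
    have h1 : Integrable
        (fun y : ℝ => (√(2 * π * v))⁻¹ * (y * rexp (-(2 * (v:ℝ))⁻¹ * y^2))) := by
      exact (integrable_mul_exp_neg_mul_sq hb).const_mul _
    have h2 := h1.comp_sub_right μ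
    have h3 := (integrable_gaussianPDFReal μ v).const_mul μ
    have h4 := h2.add h3
    refine h4.congr ?_
    exact Filter.Eventually.of_forall fun x => (key x).symm

/-- Noise-free posterior mean interpolates the data. -/
lemma postMean_interp {X : Type*} {m : ℕ} (S₀ : X → X → ℝ) (μ₀ : X → ℝ)
    (x : Fin m → X) (y : Fin m → ℝ) (hK : IsUnit (kernelMat S₀ x 0).det) (j : Fin m) :
    postMean S₀ μ₀ x y 0 (x j) = y j := by
  unfold postMean
  have hrow : (fun i => S₀ (x j) (x i)) = (kernelMat S₀ x 0) j := by
    funext i; simp [kernelMat]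
  rw [hrow]
  have h1 : (kernelMat S₀ x 0) j ⬝ᵥ ((kernelMat S₀ x 0)⁻¹ *ᵥ (y - fun i => μ₀ (x i)))
      = ((kernelMat S₀ x 0) *ᵥ ((kernelMat S₀ x 0)⁻¹ *ᵥ (y - fun i => μ₀ (x i)))) j := rfl
  rw [h1, Matrix.mulVec_mulVec, Matrix.mul_nonsing_inv _ hK, Matrix.one_mulVec]
  simp

lemma ciSup_fin_succ {n : ℕ} (hn : 0 < n) (g : Fin (n + 1) → ℝ) :
    (⨆ i, g i) = max (⨆ i : Fin n, g i.castSucc) (g (Fin.last n)) := by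
  haveI : Nonempty (Fin n) := ⟨⟨0, hn⟩⟩
  apply le_antisymm
  · refine ciSup_le fun i => ?_
    refine Fin.lastCases ?_ (fun i => ?_) i
    · exact le_max_right _ _
    · exact le_trans
        (le_ciSup (f := fun i : Fin n => g i.castSucc)
          (Set.Finite.bddAbove (Set.finite_range _)) i) (le_max_left _ _)
  · exact max_le
      (ciSup_le fun i => le_ciSup (Set.Finite.bddAbove (Set.finite_range g)) i.castSucc)
      (le_ciSup (Set.Finite.bddAbove (Set.finite_range g)) (Fin.last n))

/-- In noise-free Gaussian process regression (`λ = 0`), with `Aₙ = {x₁,…,xₙ}` and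
`A_{n+1} = {x₁,…,x_{n+1}}`, and the value `y_{n+1}` of the new observation at the candidate
point `x_{n+1}` distributed normally with mean `μₙ(x_{n+1})` and variance `σₙ²(x_{n+1}) > 0`,
the knowledge-gradient factor `E[max_{i≤n+1} μ_{n+1}(xᵢ)] - max_{i≤n} μₙ(xᵢ)` equals the
expected improvement `E[(y_{n+1} - f*ₙ)⁺]`, where `f*ₙ = max_{i≤n} yᵢ`. -/
theorem stmt12 {X : Type*} (n : ℕ) (hn : 0 < n) (x : Fin (n + 1) → X) (yobs : Fin n → ℝ)
    (μ₀ : X → ℝ) (S₀ : X → X → ℝ) (hsym : ∀ a b, S₀ a b = S₀ b a)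
    (hdist : Function.Injective (x ∘ Fin.castSucc))
    (hKn : IsUnit (kernelMat S₀ (x ∘ Fin.castSucc) 0).det)
    (hKn1 : IsUnit (kernelMat S₀ x 0).det)
    (hσ : 0 < postCov S₀ (x ∘ Fin.castSucc) 0 (x (Fin.last n)) (x (Fin.last n))) :
    (∫ w, (⨆ i : Fin (n + 1), postMean S₀ μ₀ x (Fin.snoc yobs w) 0 (x i))
          ∂(gaussianReal (postMean S₀ μ₀ (x ∘ Fin.castSucc) yobs 0 (x (Fin.last n)))
            ⟨postCov S₀ (x ∘ Fin.castSucc) 0 (x (Fin.last n)) (x (Fin.last n)), hσ.le⟩))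
        - (⨆ i : Fin n, postMean S₀ μ₀ (x ∘ Fin.castSucc) yobs 0 (x i.castSucc))
      = ∫ w, max (w - ⨆ i, yobs i) 0
          ∂(gaussianReal (postMean S₀ μ₀ (x ∘ Fin.castSucc) yobs 0 (x (Fin.last n)))
            ⟨postCov S₀ (x ∘ Fin.castSucc) 0 (x (Fin.last n)) (x (Fin.last n)), hσ.le⟩) := by
  haveI : Nonempty (Fin n) := ⟨⟨0, hn⟩⟩
  set ν := gaussianReal (postMean S₀ μ₀ (x ∘ Fin.castSucc) yobs 0 (x (Fin.last n)))
      ⟨postCov S₀ (x ∘ Fin.castSucc) 0 (x (Fin.last n)) (x (Fin.last n)), hσ.le⟩ with hν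
  set f : ℝ := ⨆ i, yobs i with hf
  -- posterior mean on old points
  have hstar : (⨆ i : Fin n, postMean S₀ μ₀ (x ∘ Fin.castSucc) yobs 0 (x i.castSucc)) = f := by
    refine iSup_congr fun i => ?_
    exact postMean_interp S₀ μ₀ (x ∘ Fin.castSucc) yobs hKn i
  -- posterior mean on all points after new observation
  have hsup : ∀ w : ℝ, (⨆ i : Fin (n + 1), postMean S₀ μ₀ x (Fin.snoc yobs w) 0 (x i))
      = max f w := by
    intro w
    have h1 : ∀ i, postMean S₀ μ₀ x (Fin.snoc yobs w) 0 (x i) = (Fin.snoc yobs w : Fin (n + 1) → ℝ) i := by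
      intro i
      exact postMean_interp S₀ μ₀ x (Fin.snoc yobs w) hKn1 i
    simp_rw [h1]
    rw [ciSup_fin_succ hn]
    simp [Fin.snoc_castSucc, Fin.snoc_last, hf]
  simp_rw [hsup, hstar]
  have hmax : ∀ w : ℝ, max f w = max (w - f) 0 + f := by
    intro w
    rw [← max_add_add_right, sub_add_cancel, zero_add, max_comm]
  have hintid : Integrable (fun w : ℝ => w) ν := integrable_id_gaussianReal' _ _
  haveI : IsProbabilityMeasure ν := by
    rw [hν]; exact instIsProbabilityMeasureGaussianReal _ _
  have hi : Integrable (fun w : ℝ => w - f) ν := hintid.sub (integrable_const _)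
  have hg : Integrable (fun w : ℝ => max (w - f) 0) ν := by
    have heq : (fun w : ℝ => max (w - f) 0) = fun w => ((w - f) + |w - f|) / 2 := by
      funext w
      rcases le_total 0 (w - f) with h | h
      · rw [max_eq_left h, abs_of_nonneg h]; ring
      · rw [max_eq_right h, abs_of_nonpos h]; ring
    rw [heq]
    exact (hi.add hi.abs).div_const 2
  haveI : IsProbabilityMeasure ν := by
    rw [hν]; exact instIsProbabilityMeasureGaussianReal _ _
  simp_rw [hmax]
  rw [integral_add hg (integrable_const _), integral_const]
  simp
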